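/- Let R be a domain, X a partially ordered set of variables, and P a maximal small ideal of R[X]. Then Y = P ∩ X is upward compatible: every finite subset of Y has an upper bound in X. -/

import Mathlib

/-- `Y` is upward compatible in the poset `X`: every finite subset of `Y`
has an upper bound in `X`. -/
def UpCompatible {X : Type*} [PartialOrder X] (Y : Set X) : Prop :=
  ∀ F : Finset X, ↑F ⊆ Y → ∃ x : X, ∀ y ∈ F, y ≤ x

/-- A polynomial `f ∈ R[X]` is dominated by the variable `x`: every monomial
appearing in `f` contains some variable `y ≤ x`. -/
def Dominated {R : Type*} [CommRing R] {X : Type*} [PartialOrder X]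
    (f : MvPolynomial X R) (x : X) : Prop :=
  ∀ m ∈ f.support, ∃ y : X, m y ≠ 0 ∧ y ≤ x

/-- A polynomial is small if it is dominated by some variable. -/
def SmallPoly {R : Type*} [CommRing R] {X : Type*} [PartialOrder X]
    (f : MvPolynomial X R) : Prop :=
  ∃ x : X, Dominated f x

/-- An ideal is small if all of its elements are small. -/
def SmallIdeal {R : Type*} [CommRing R] {X : Type*} [PartialOrder X]
    (I : Ideal (MvPolynomial X R)) : Prop :=
  ∀ f ∈ I, SmallPoly f

/-- A maximal small ideal: a small ideal not properly contained in any small ideal. -/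
def MaxSmallIdeal {R : Type*} [CommRing R] {X : Type*} [PartialOrder X]
    (P : Ideal (MvPolynomial X R)) : Prop :=
  SmallIdeal P ∧ ∀ I : Ideal (MvPolynomial X R), SmallIdeal I → P ≤ I → I = P

/-- The set of variables contained in a maximal small ideal is upward compatible. -/
theorem maxSmallIdeal_vars_compatible {R : Type*} [CommRing R] [IsDomain R]
    {X : Type*} [PartialOrder X] (P : Ideal (MvPolynomial X R))
    (hP : MaxSmallIdeal P) :
    UpCompatible {x : X | MvPolynomial.X x ∈ P} := by
  intro F hF
  classical
  -- the sum of the variables in F lies in P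
  set f : MvPolynomial X R := ∑ y ∈ F, MvPolynomial.X y with hf
  have hfP : f ∈ P := Ideal.sum_mem P fun y hy => hF hy
  obtain ⟨x, hdom⟩ := hP.1 f hfP
  refine ⟨x, fun y hy => ?_⟩
  -- the monomial `single y 1` appears in f with coefficient 1
  have hcoeff : MvPolynomial.coeff (Finsupp.single y 1) f = 1 := by
    rw [hf, MvPolynomial.coeff_sum]
    rw [Finset.sum_eq_single y]
    · simp [MvPolynomial.coeff_X]
    · intro b _ hb
      rw [MvPolynomial.coeff_X']
      simp only [ite_eq_right_iff]
      intro h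
      exact absurd (by simpa using (Finsupp.single_left_injective one_ne_zero h)) hb
    · intro h; exact absurd hy h
  have hmem : Finsupp.single y 1 ∈ f.support := by
    rw [MvPolynomial.mem_support_iff, hcoeff]; exact one_ne_zero
  obtain ⟨z, hz, hzx⟩ := hdom _ hmem
  have : z = y := by
    by_contra hne
    exact hz (Finsupp.single_eq_of_ne' (Ne.symm hne))
  exact this ▸ hzx
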